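/- Counting confluence of weak reduction: if t →w* u1 with counter c1 = (b1,e1) and t →w* u2 with counter c2 = (b2,e2), then there exist a term t' and counters c̄1, c̄2 such that u1 →w* t' with counter c̄2, u2 →w* t' with counter c̄1, c̄i ≤ ci componentwise-ordered (for i = 1,2), and c1 + c̄2 = c2 + c̄1 (componentwise addition). Here t →w* u with counter (b,e) means t reduces to u in b dB-steps and e steps of kind s! or d!. -/

import Mathlib

/-! # The Bang Calculus Revisited: common definitions.

Terms are represented with de Bruijn indices, so that all the meta-level
substitutions are capture-avoiding by construction. -/

/-- Terms of the λ!-calculus.  `esub t u` is the explicit substitution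
`t[0\u]`: the (anonymous) binder scopes over `t`, not over `u`. -/
inductive Tm : Type
  | var : ℕ → Tm
  | app : Tm → Tm → Tm
  | lam : Tm → Tm
  | bang : Tm → Tm
  | der : Tm → Tm
  | esub : Tm → Tm → Tm
  deriving DecidableEq

namespace Tm

/-- lifting a renaming under a binder -/
def liftR (f : ℕ → ℕ) : ℕ → ℕ
  | 0 => 0
  | k + 1 => f k + 1

/-- renaming of free variables -/
def rename (f : ℕ → ℕ) : Tm → Tm
  | var k => var (f k)
  | app t u => app (rename f t) (rename f u)
  | lam t => lam (rename (liftR f) t)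
  | bang t => bang (rename f t)
  | der t => der (rename f t)
  | esub t u => esub (rename (liftR f) t) (rename f u)

/-- lifting a simultaneous substitution under a binder -/
def liftS (σ : ℕ → Tm) : ℕ → Tm
  | 0 => var 0
  | k + 1 => rename (· + 1) (σ k)

/-- simultaneous (capture-avoiding) substitution -/
def subst (σ : ℕ → Tm) : Tm → Tm
  | var k => σ k
  | app t u => app (subst σ t) (subst σ u)
  | lam t => lam (subst (liftS σ) t)
  | bang t => bang (subst σ t)
  | der t => der (subst σ t)
  | esub t u => esub (subst (liftS σ) t) (subst σ u)

/-- capture-avoiding substitution of `u` for the variable `0` of `t`,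
where the result is placed under `n` extra binders (and `u` already lives
at that depth). -/
def substIn (n : ℕ) (u : Tm) (t : Tm) : Tm :=
  subst (fun k => match k with
    | 0 => u
    | k + 1 => var (k + n)) t

/-- capture-avoiding meta-level substitution `t{0 := u}` -/
def subst0 (u : Tm) (t : Tm) : Tm := substIn 0 u t

/-- plugging a term into a list context `L ::= ◻ | L[x\t]`; the head of the
list is the argument of the outermost explicit substitution. -/
def plug : List Tm → Tm → Tm
  | [], s => s
  | e :: L, s => esub (plug L s) e

/-- the w-size of a term -/
def wsize : Tm → ℕ
  | var _ => 0
  | app t u => 1 + wsize t + wsize u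
  | lam t => 1 + wsize t
  | bang _ => 0
  | der t => 1 + wsize t
  | esub t u => 1 + wsize t + wsize u

end Tm

/-- the names of the three rewriting rules of the λ!-calculus -/
inductive Rule : Type
  | dB | sb | db
  deriving DecidableEq

open Tm in
/-- the three rewriting rules, applied at the root (at a distance) -/
inductive Root : Rule → Tm → Tm → Prop
  | dB (L : List Tm) (t u : Tm) :
      Root .dB (app (plug L (lam t)) u)
               (plug L (esub t (rename (· + L.length) u)))
  | sb (L : List Tm) (t u : Tm) :
      Root .sb (esub t (plug L (bang u))) (plug L (substIn L.length u t))
  | db (L : List Tm) (t : Tm) :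
      Root .db (der (plug L (bang t))) (plug L t)

/-- closure of each rule under weak contexts (no reduction under `bang`) -/
inductive Step : Rule → Tm → Tm → Prop
  | root {r : Rule} {t t' : Tm} : Root r t t' → Step r t t'
  | appL {r t t'} (u : Tm) : Step r t t' → Step r (Tm.app t u) (Tm.app t' u)
  | appR {r u u'} (t : Tm) : Step r u u' → Step r (Tm.app t u) (Tm.app t u')
  | lam {r t t'} : Step r t t' → Step r (Tm.lam t) (Tm.lam t')
  | der {r t t'} : Step r t t' → Step r (Tm.der t) (Tm.der t')
  | esubL {r t t'} (u : Tm) : Step r t t' → Step r (Tm.esub t u) (Tm.esub t' u)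
  | esubR {r u u'} (t : Tm) : Step r u u' → Step r (Tm.esub t u) (Tm.esub t u')

/-- the weak reduction `→w` of the λ!-calculus -/
def StepW (t t' : Tm) : Prop := ∃ r, Step r t t'

/-- counted weak reduction: `RedCnt t (b, e) u` holds iff `t →w* u` using `b`
dB-steps and `e` steps of kind s!/d!. -/
inductive RedCnt : Tm → ℕ × ℕ → Tm → Prop
  | refl (t : Tm) : RedCnt t (0, 0) t
  | db {t t₁ u : Tm} {b e : ℕ} :
      Step .dB t t₁ → RedCnt t₁ (b, e) u → RedCnt t (b + 1, e) u
  | ex {t t₁ u : Tm} {b e : ℕ} :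
      (Step .sb t t₁ ∨ Step .db t t₁) → RedCnt t₁ (b, e) u →
      RedCnt t (b, e + 1) u

mutual
  /-- neutral w-normal terms -/
  inductive NeW : Tm → Prop
    | var (k : ℕ) : NeW (Tm.var k)
    | app {t u : Tm} : NaW t → NoW u → NeW (Tm.app t u)
    | der {t : Tm} : NbW t → NeW (Tm.der t)
    | esub {t u : Tm} : NeW t → NbW u → NeW (Tm.esub t u)
  /-- neutral-abs w-normal terms -/
  inductive NaW : Tm → Prop
    | bang (t : Tm) : NaW (Tm.bang t)
    | ne {t : Tm} : NeW t → NaW t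
    | esub {t u : Tm} : NaW t → NbW u → NaW (Tm.esub t u)
  /-- neutral-bang w-normal terms -/
  inductive NbW : Tm → Prop
    | ne {t : Tm} : NeW t → NbW t
    | lam {t : Tm} : NoW t → NbW (Tm.lam t)
    | esub {t u : Tm} : NbW t → NbW u → NbW (Tm.esub t u)
  /-- w-normal terms -/
  inductive NoW : Tm → Prop
    | na {t : Tm} : NaW t → NoW t
    | nb {t : Tm} : NbW t → NoW t
end

/-- clashes -/
inductive Clash : Tm → Prop
  | appBang (L : List Tm) (t u : Tm) : Clash (Tm.app (Tm.plug L (Tm.bang t)) u)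
  | esubLam (L : List Tm) (t u : Tm) : Clash (Tm.esub t (Tm.plug L (Tm.lam u)))
  | derLam (L : List Tm) (u : Tm) : Clash (Tm.der (Tm.plug L (Tm.lam u)))
  | appLam (L : List Tm) (t u : Tm) : Clash (Tm.app t (Tm.plug L (Tm.lam u)))

/-- `WSub t s` holds iff `t = W⟨s⟩` for some weak context `W` -/
inductive WSub : Tm → Tm → Prop
  | refl (t : Tm) : WSub t t
  | appL {t s : Tm} (u : Tm) : WSub t s → WSub (Tm.app t u) s
  | appR {u s : Tm} (t : Tm) : WSub u s → WSub (Tm.app t u) s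
  | lam {t s : Tm} : WSub t s → WSub (Tm.lam t) s
  | der {t s : Tm} : WSub t s → WSub (Tm.der t) s
  | esubL {t s : Tm} (u : Tm) : WSub t s → WSub (Tm.esub t u) s
  | esubR {u s : Tm} (t : Tm) : WSub u s → WSub (Tm.esub t u) s

/-- weak clash freeness -/
def Wcf (t : Tm) : Prop := ¬ ∃ s, WSub t s ∧ Clash s

mutual
  /-- neutral weak clash free normal terms -/
  inductive NeCF : Tm → Prop
    | var (k : ℕ) : NeCF (Tm.var k)
    | app {t u : Tm} : NeCF t → NaCF u → NeCF (Tm.app t u)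
    | der {t : Tm} : NeCF t → NeCF (Tm.der t)
    | esub {t u : Tm} : NeCF t → NeCF u → NeCF (Tm.esub t u)
  /-- neutral-abs weak clash free normal terms -/
  inductive NaCF : Tm → Prop
    | bang (t : Tm) : NaCF (Tm.bang t)
    | ne {t : Tm} : NeCF t → NaCF t
    | esub {t u : Tm} : NaCF t → NeCF u → NaCF (Tm.esub t u)
  /-- neutral-bang weak clash free normal terms -/
  inductive NbCF : Tm → Prop
    | ne {t : Tm} : NeCF t → NbCF t
    | lam {t : Tm} : NoCF t → NbCF (Tm.lam t)
    | esub {t u : Tm} : NbCF t → NeCF u → NbCF (Tm.esub t u)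
  /-- weak clash free normal terms -/
  inductive NoCF : Tm → Prop
    | na {t : Tm} : NaCF t → NoCF t
    | nb {t : Tm} : NbCF t → NoCF t
end

/-- Types of system 𝒰: base types, multiset types and arrow types.  A
multiset type is given by a list of types (a representative of the multiset
it determines). -/
inductive Ty : Type
  | base : ℕ → Ty
  | mult : List Ty → Ty
  | arr : List Ty → Ty → Ty

/-- typing contexts: functions from (de Bruijn) variables to multiset types -/
abbrev Ctx := ℕ → Multiset Ty

/-- the context mapping `k` to `M` and anything else to the empty multiset -/
def Ctx.single (k : ℕ) (M : Multiset Ty) : Ctx := fun j => if j = k then M else 0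

/-- removing the (type of the) bound variable `0` from a context -/
def Ctx.tail (Γ : Ctx) : Ctx := fun k => Γ (k + 1)

/-- extending a context with a multiset type for a fresh variable `0` -/
def Ctx.cons (M : Multiset Ty) (Γ : Ctx) : Ctx := fun k =>
  match k with
  | 0 => M
  | k + 1 => Γ k

/-- Sized typing of system 𝒰: `DerU Γ t τ n` means that there is a derivation
of `Γ ⊢ t : τ` whose size (number of rules, not counting `bg`) is `n`. -/
inductive DerU : Ctx → Tm → Ty → ℕ → Prop
  | ax (k : ℕ) (σ : Ty) : DerU (Ctx.single k {σ}) (Tm.var k) σ 1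
  | app {Γ Δ : Ctx} {t u : Tm} {M : List Ty} {τ : Ty} {n m : ℕ} :
      DerU Γ t (Ty.arr M τ) n → DerU Δ u (Ty.mult M) m →
      DerU (Γ + Δ) (Tm.app t u) τ (n + m + 1)
  | abs {Γ : Ctx} {t : Tm} {τ : Ty} {n : ℕ} (M : List Ty) :
      DerU Γ t τ n → Multiset.ofList M = Γ 0 →
      DerU (Ctx.tail Γ) (Tm.lam t) (Ty.arr M τ) (n + 1)
  | es {Γ Δ : Ctx} {t u : Tm} {σ : Ty} {M : List Ty} {n m : ℕ} :
      DerU Γ t σ n → DerU Δ u (Ty.mult M) m → Multiset.ofList M = Γ 0 →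
      DerU (Ctx.tail Γ + Δ) (Tm.esub t u) σ (n + m + 1)
  | bg {t : Tm} (prs : List (Ctx × Ty × ℕ)) :
      (∀ p ∈ prs, DerU p.1 t p.2.1 p.2.2) →
      DerU ((prs.map (·.1)).sum) (Tm.bang t)
           (Ty.mult (prs.map (·.2.1))) ((prs.map (·.2.2)).sum)
  | dr {Γ : Ctx} {t : Tm} {σ : Ty} {n : ℕ} :
      DerU Γ t (Ty.mult [σ]) n → DerU Γ (Tm.der t) σ (n + 1)

/-! ## The source λ-calculus with explicit substitutions (CBN / CBV) -/

/-- terms of the λ-calculus with explicit substitutions (de Bruijn) -/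
inductive Lm : Type
  | var : ℕ → Lm
  | app : Lm → Lm → Lm
  | lam : Lm → Lm
  | esub : Lm → Lm → Lm
  deriving DecidableEq

namespace Lm

def liftR (f : ℕ → ℕ) : ℕ → ℕ
  | 0 => 0
  | k + 1 => f k + 1

def rename (f : ℕ → ℕ) : Lm → Lm
  | var k => var (f k)
  | app t u => app (rename f t) (rename f u)
  | lam t => lam (rename (liftR f) t)
  | esub t u => esub (rename (liftR f) t) (rename f u)

def liftS (σ : ℕ → Lm) : ℕ → Lm
  | 0 => var 0
  | k + 1 => rename (· + 1) (σ k)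

def subst (σ : ℕ → Lm) : Lm → Lm
  | var k => σ k
  | app t u => app (subst σ t) (subst σ u)
  | lam t => lam (subst (liftS σ) t)
  | esub t u => esub (subst (liftS σ) t) (subst σ u)

def substIn (n : ℕ) (u : Lm) (t : Lm) : Lm :=
  subst (fun k => match k with
    | 0 => u
    | k + 1 => var (k + n)) t

/-- capture-avoiding meta-level substitution `t{0 := u}` -/
def subst0 (u : Lm) (t : Lm) : Lm := substIn 0 u t

def plug : List Lm → Lm → Lm
  | [], s => s
  | e :: L, s => esub (plug L s) e

/-- values -/
def IsVal : Lm → Prop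
  | var _ => True
  | lam _ => True
  | _ => False

/-- the n-size of a term -/
def nsize : Lm → ℕ
  | var _ => 0
  | lam t => 1 + nsize t
  | app t _ => 1 + nsize t
  | esub t _ => 1 + nsize t

/-- the v-size of a term -/
def vsize : Lm → ℕ
  | var _ => 0
  | lam _ => 0
  | app t u => 1 + vsize t + vsize u
  | esub t u => 1 + vsize t + vsize u

end Lm

/-- names of the CBN rules -/
inductive NRule : Type
  | dB | s
  deriving DecidableEq

/-- call-by-name reduction (closure of dB and s under CBN contexts) -/
inductive StepN : NRule → Lm → Lm → Prop
  | dB (L : List Lm) (t u : Lm) :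
      StepN .dB (Lm.app (Lm.plug L (Lm.lam t)) u)
                (Lm.plug L (Lm.esub t (Lm.rename (· + L.length) u)))
  | s (t u : Lm) : StepN .s (Lm.esub t u) (Lm.subst0 u t)
  | appL {r t t'} (u : Lm) : StepN r t t' → StepN r (Lm.app t u) (Lm.app t' u)
  | lam {r t t'} : StepN r t t' → StepN r (Lm.lam t) (Lm.lam t')
  | esubL {r t t'} (u : Lm) : StepN r t t' → StepN r (Lm.esub t u) (Lm.esub t' u)

/-- names of the CBV rules -/
inductive VRule : Type
  | dB | sv
  deriving DecidableEq

/-- call-by-value reduction (closure of dB and sv under CBV contexts) -/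
inductive StepV : VRule → Lm → Lm → Prop
  | dB (L : List Lm) (t u : Lm) :
      StepV .dB (Lm.app (Lm.plug L (Lm.lam t)) u)
                (Lm.plug L (Lm.esub t (Lm.rename (· + L.length) u)))
  | sv (L : List Lm) (t v : Lm) (hv : Lm.IsVal v) :
      StepV .sv (Lm.esub t (Lm.plug L v)) (Lm.plug L (Lm.substIn L.length v t))
  | appL {r t t'} (u : Lm) : StepV r t t' → StepV r (Lm.app t u) (Lm.app t' u)
  | appR {r u u'} (t : Lm) : StepV r u u' → StepV r (Lm.app t u) (Lm.app t u')
  | esubL {r t t'} (u : Lm) : StepV r t t' → StepV r (Lm.esub t u) (Lm.esub t' u)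
  | esubR {r u u'} (t : Lm) : StepV r u u' → StepV r (Lm.esub t u) (Lm.esub t u')

mutual
  /-- CBN neutral terms -/
  inductive NeN : Lm → Prop
    | var (k : ℕ) : NeN (Lm.var k)
    | app {t : Lm} (u : Lm) : NeN t → NeN (Lm.app t u)
  /-- CBN normal terms -/
  inductive NoN : Lm → Prop
    | lam {t : Lm} : NoN t → NoN (Lm.lam t)
    | ne {t : Lm} : NeN t → NoN t
end

mutual
  /-- CBV (substituted) variables -/
  inductive VrV : Lm → Prop
    | var (k : ℕ) : VrV (Lm.var k)
    | esub {t u : Lm} : VrV t → NeV u → VrV (Lm.esub t u)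
  /-- CBV neutral terms -/
  inductive NeV : Lm → Prop
    | app₁ {t u : Lm} : VrV t → NoV u → NeV (Lm.app t u)
    | app₂ {t u : Lm} : NeV t → NoV u → NeV (Lm.app t u)
    | esub {t u : Lm} : NeV t → NeV u → NeV (Lm.esub t u)
  /-- CBV normal terms -/
  inductive NoV : Lm → Prop
    | lam (t : Lm) : NoV (Lm.lam t)
    | vr {t : Lm} : VrV t → NoV t
    | ne {t : Lm} : NeV t → NoV t
    | esub {t u : Lm} : NoV t → NeV u → NoV (Lm.esub t u)
end

/-- counted CBN reduction, recording the number of dB- and s-steps -/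
inductive RedCntN : Lm → ℕ × ℕ → Lm → Prop
  | refl (t : Lm) : RedCntN t (0, 0) t
  | db {t t₁ u : Lm} {b e : ℕ} :
      StepN .dB t t₁ → RedCntN t₁ (b, e) u → RedCntN t (b + 1, e) u
  | s {t t₁ u : Lm} {b e : ℕ} :
      StepN .s t t₁ → RedCntN t₁ (b, e) u → RedCntN t (b, e + 1) u

/-- counted CBV reduction, recording the number of dB- and sv-steps -/
inductive RedCntV : Lm → ℕ × ℕ → Lm → Prop
  | refl (t : Lm) : RedCntV t (0, 0) t
  | db {t t₁ u : Lm} {b e : ℕ} :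
      StepV .dB t t₁ → RedCntV t₁ (b, e) u → RedCntV t (b + 1, e) u
  | sv {t t₁ u : Lm} {b e : ℕ} :
      StepV .sv t t₁ → RedCntV t₁ (b, e) u → RedCntV t (b, e + 1) u

/-- the CBN embedding into the λ!-calculus -/
def cbn : Lm → Tm
  | .var k => .var k
  | .lam t => .lam (cbn t)
  | .app t u => .app (cbn t) (.bang (cbn u))
  | .esub t u => .esub (cbn t) (.bang (cbn u))

/-- `deBang t = some s'` iff `t = L⟨!s⟩` and `s' = L⟨s⟩` -/
def deBang : Tm → Option Tm
  | .bang s => some s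
  | .esub t e => (deBang t).map (fun s => Tm.esub s e)
  | _ => none

/-- the CBV embedding into the λ!-calculus -/
def cbv : Lm → Tm
  | .var k => .bang (.var k)
  | .lam t => .bang (.lam (cbv t))
  | .app t u =>
      match deBang (cbv t) with
      | some r => Tm.app r (cbv u)
      | none => Tm.app (.der (cbv t)) (cbv u)
  | .esub t u => .esub (cbv t) (cbv u)

/-- Sized typing of system 𝒩 (call-by-name): `DerN Γ t τ n` means that there
is a derivation of `Γ ⊢ t : τ` of size `n` (counting all rules). -/
inductive DerN : Ctx → Lm → Ty → ℕ → Prop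
  | ax (k : ℕ) (σ : Ty) : DerN (Ctx.single k {σ}) (Lm.var k) σ 1
  | app {Γ : Ctx} {t u : Lm} {τ : Ty} {n : ℕ} (prs : List (Ctx × Ty × ℕ)) :
      DerN Γ t (Ty.arr (prs.map (·.2.1)) τ) n →
      (∀ p ∈ prs, DerN p.1 u p.2.1 p.2.2) →
      DerN (Γ + (prs.map (·.1)).sum) (Lm.app t u) τ
           (n + (prs.map (·.2.2)).sum + 1)
  | abs {Γ : Ctx} {t : Lm} {τ : Ty} {n : ℕ} (M : List Ty) :
      DerN Γ t τ n → Multiset.ofList M = Γ 0 →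
      DerN (Ctx.tail Γ) (Lm.lam t) (Ty.arr M τ) (n + 1)
  | es {Γ : Ctx} {t u : Lm} {τ : Ty} {n : ℕ} (prs : List (Ctx × Ty × ℕ)) :
      DerN Γ t τ n →
      Multiset.ofList (prs.map (·.2.1)) = Γ 0 →
      (∀ p ∈ prs, DerN p.1 u p.2.1 p.2.2) →
      DerN (Ctx.tail Γ + (prs.map (·.1)).sum) (Lm.esub t u) τ
           (n + (prs.map (·.2.2)).sum + 1)

/-- Sized typing of system 𝒱 (call-by-value): `DerV Γ t τ n` means that there
is a derivation of `Γ ⊢ t : τ` of size `n` (each rule counts 1, except that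
`ax` counts the cardinal of its multiset and `abs` contributes the sizes of
its premises plus the number of premises). -/
inductive DerV : Ctx → Lm → Ty → ℕ → Prop
  | ax (k : ℕ) (M : List Ty) :
      DerV (Ctx.single k (Multiset.ofList M)) (Lm.var k) (Ty.mult M) M.length
  | es {Γ Δ : Ctx} {t u : Lm} {σ : Ty} {M : List Ty} {n m : ℕ} :
      DerV Γ t σ n → DerV Δ u (Ty.mult M) m → Multiset.ofList M = Γ 0 →
      DerV (Ctx.tail Γ + Δ) (Lm.esub t u) σ (n + m + 1)
  | abs {t : Lm} (prs : List (Ctx × List Ty × Ty × ℕ)) :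
      (∀ p ∈ prs, DerV p.1 t p.2.2.1 p.2.2.2) →
      (∀ p ∈ prs, Multiset.ofList p.2.1 = p.1 0) →
      DerV ((prs.map (fun p => Ctx.tail p.1)).sum) (Lm.lam t)
           (Ty.mult (prs.map (fun p => Ty.arr p.2.1 p.2.2.1)))
           ((prs.map (·.2.2.2)).sum + prs.length)
  | app {Γ Δ : Ctx} {t u : Lm} {M : List Ty} {τ : Ty} {n m : ℕ} :
      DerV Γ t (Ty.mult [Ty.arr M τ]) n → DerV Δ u (Ty.mult M) m →
      DerV (Γ + Δ) (Lm.app t u) τ (n + m + 1)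

namespace CC
open Tm

theorem liftR_comp (f g : ℕ → ℕ) :
    (fun k => liftR f (liftR g k)) = liftR (fun k => f (g k)) := by
  funext k; cases k <;> rfl

theorem rename_rename (f g : ℕ → ℕ) (t : Tm) :
    rename f (rename g t) = rename (fun k => f (g k)) t := by
  induction t generalizing f g <;> simp only [rename, *, liftR_comp]

theorem liftS_liftR (σ : ℕ → Tm) (f : ℕ → ℕ) :
    (fun k => liftS σ (liftR f k)) = liftS (fun k => σ (f k)) := by
  funext k; cases k <;> rfl

theorem subst_rename (σ : ℕ → Tm) (f : ℕ → ℕ) (t : Tm) :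
    subst σ (rename f t) = subst (fun k => σ (f k)) t := by
  induction t generalizing σ f <;> simp only [rename, subst, *, liftS_liftR]

theorem rename_liftS (f : ℕ → ℕ) (σ : ℕ → Tm) :
    (fun k => rename (liftR f) (liftS σ k)) = liftS (fun k => rename f (σ k)) := by
  funext k; cases k with
  | zero => rfl
  | succ k =>
      show rename (liftR f) (rename (fun j => j + 1) (σ k)) =
        rename (fun j => j + 1) (rename f (σ k))
      rw [rename_rename, rename_rename]
      congr 1

theorem rename_subst (f : ℕ → ℕ) (σ : ℕ → Tm) (t : Tm) :
    rename f (subst σ t) = subst (fun k => rename f (σ k)) t := by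
  induction t generalizing σ f <;> simp only [rename, subst, *, rename_liftS]

theorem liftS_liftS (τ σ : ℕ → Tm) :
    (fun k => subst (liftS τ) (liftS σ k)) = liftS (fun k => subst τ (σ k)) := by
  funext k; cases k with
  | zero => rfl
  | succ k =>
      show subst (liftS τ) (rename (fun j => j + 1) (σ k)) =
        rename (fun j => j + 1) (subst τ (σ k))
      rw [subst_rename, rename_subst]
      rfl

theorem subst_subst (τ σ : ℕ → Tm) (t : Tm) :
    subst τ (subst σ t) = subst (fun k => subst τ (σ k)) t := by
  induction t generalizing σ τ <;> simp only [subst, *, liftS_liftS]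

theorem liftS_var (f : ℕ → ℕ) :
    liftS (fun k => var (f k)) = fun k => var (liftR f k) := by
  funext k; cases k <;> rfl

theorem rename_eq_subst (f : ℕ → ℕ) (t : Tm) :
    rename f t = subst (fun k => var (f k)) t := by
  induction t generalizing f <;> simp only [rename, subst, *, liftS_var]

theorem liftS_var_id : liftS Tm.var = Tm.var := by
  funext k; cases k <;> rfl

theorem subst_var_id (t : Tm) : subst Tm.var t = t := by
  induction t <;> simp only [subst, *, liftS_var_id]

theorem plug_append (L₁ L₂ : List Tm) (c : Tm) :
    plug (L₁ ++ L₂) c = plug L₁ (plug L₂ c) := by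
  induction L₁ with
  | nil => rfl
  | cons e L ih =>
      show Tm.esub (plug (L ++ L₂) c) e = Tm.esub (plug L (plug L₂ c)) e
      rw [ih]

/-- mapping a substitution over the elements of a list context -/
def substL (σ : ℕ → Tm) : List Tm → List Tm
  | [] => []
  | e :: L => subst σ e :: substL (liftS σ) L

@[simp] theorem substL_length (σ : ℕ → Tm) (L : List Tm) :
    (substL σ L).length = L.length := by
  induction L generalizing σ <;> simp [substL, *]

/-- iterated `liftS` -/
def liftSN : ℕ → (ℕ → Tm) → ℕ → Tm
  | 0, σ => σ
  | n + 1, σ => liftSN n (liftS σ)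

theorem subst_plug (σ : ℕ → Tm) (L : List Tm) (c : Tm) :
    subst σ (plug L c) = plug (substL σ L) (subst (liftSN L.length σ) c) := by
  induction L generalizing σ with
  | nil => rfl
  | cons e L ih => simp only [plug, subst, substL, ih, List.length_cons, liftSN]

theorem liftSN_add (n : ℕ) (σ : ℕ → Tm) (k : ℕ) :
    liftSN n σ (k + n) = rename (· + n) (σ k) := by
  induction n generalizing σ k with
  | zero =>
      show σ k = rename (· + 0) (σ k)
      rw [rename_eq_subst]
      have : (fun j => Tm.var (j + 0)) = Tm.var := by funext j; rfl
      rw [this, subst_var_id]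
  | succ n ih =>
      show liftSN n (liftS σ) (k + (n + 1)) = rename (· + (n + 1)) (σ k)
      have h1 : k + (n + 1) = (k + 1) + n := by omega
      rw [h1, ih (liftS σ) (k + 1)]
      show rename (· + n) (rename (fun j => j + 1) (σ k)) = _
      rw [rename_rename]
      have : (fun j => (j + 1) + n) = (· + (n + 1)) := by funext j; omega
      rw [this]

theorem subst_liftSN_rename (σ : ℕ → Tm) (n : ℕ) (v : Tm) :
    subst (liftSN n σ) (rename (· + n) v) = rename (· + n) (subst σ v) := by
  rw [subst_rename, rename_subst]
  exact congrFun (congrArg subst (funext fun k => liftSN_add n σ k)) v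

end CC

namespace CC
open Tm

/-- the substitution underlying `substIn` -/
def σIn (n : ℕ) (u : Tm) : ℕ → Tm := fun k =>
  match k with
  | 0 => u
  | k + 1 => var (k + n)

theorem substIn_eq (n : ℕ) (u t : Tm) : substIn n u t = subst (σIn n u) t := rfl

/-- the key commutation of a substitution with `substIn` -/
theorem subst_substIn (σ : ℕ → Tm) (n : ℕ) (u t : Tm) :
    subst (liftSN n σ) (substIn n u t) =
      substIn n (subst (liftSN n σ) u) (subst (liftS σ) t) := by
  rw [substIn_eq, substIn_eq, subst_subst, subst_subst]
  apply congrFun (congrArg subst ?_) t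
  funext k
  cases k with
  | zero => rfl
  | succ k =>
      show subst (liftSN n σ) (var (k + n)) = subst (σIn n (subst (liftSN n σ) u)) (liftS σ (k + 1))
      show liftSN n σ (k + n) = subst (σIn n (subst (liftSN n σ) u)) (rename (fun j => j + 1) (σ k))
      rw [liftSN_add, subst_rename]
      show rename (· + n) (σ k) = subst (fun j => var (j + n)) (σ k)
      rw [rename_eq_subst]

theorem rename_plug (f : ℕ → ℕ) (L : List Tm) (c : Tm) :
    rename f (plug L c) =
      plug (substL (fun k => var (f k)) L)
        (subst (liftSN L.length (fun k => var (f k))) c) := by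
  rw [rename_eq_subst, subst_plug]

theorem root_subst {r : Rule} {t t' : Tm} (σ : ℕ → Tm) (h : Root r t t') :
    Root r (subst σ t) (subst σ t') := by
  cases h with
  | dB L a u =>
      show Root _ (Tm.app (subst σ (plug L (lam a))) (subst σ u)) _
      rw [subst_plug, subst_plug]
      show Root _ (Tm.app (plug (substL σ L) (lam (subst (liftS (liftSN L.length σ)) a))) (subst σ u))
        (plug (substL σ L) (Tm.esub (subst (liftS (liftSN L.length σ)) a)
          (subst (liftSN L.length σ) (rename (· + L.length) u))))
      rw [subst_liftSN_rename]
      have hl : L.length = (substL σ L).length := (substL_length σ L).symm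
      rw [hl]
      exact Root.dB (substL σ L) _ _
  | sb L a u =>
      show Root _ (Tm.esub (subst (liftS σ) a) (subst σ (plug L (bang u)))) (subst σ (plug L (substIn L.length u a)))
      rw [subst_plug, subst_plug]
      show Root _ (Tm.esub (subst (liftS σ) a)
          (plug (substL σ L) (bang (subst (liftSN L.length σ) u))))
        (plug (substL σ L) (subst (liftSN L.length σ) (substIn L.length u a)))
      rw [subst_substIn]
      have hl : L.length = (substL σ L).length := (substL_length σ L).symm
      rw [hl]
      exact Root.sb (substL σ L) _ _
  | db L a =>
      show Root _ (Tm.der (subst σ (plug L (bang a)))) (subst σ (plug L a))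
      rw [subst_plug, subst_plug]
      exact Root.db (substL σ L) _

theorem step_subst {r : Rule} {t t' : Tm} (σ : ℕ → Tm) (h : Step r t t') :
    Step r (subst σ t) (subst σ t') := by
  induction h generalizing σ with
  | root h => exact Step.root (root_subst σ h)
  | appL u h ih => exact Step.appL _ (ih σ)
  | appR t h ih => exact Step.appR _ (ih σ)
  | lam h ih => exact Step.lam (ih (liftS σ))
  | der h ih => exact Step.der (ih σ)
  | esubL u h ih => exact Step.esubL _ (ih (liftS σ))
  | esubR t h ih => exact Step.esubR _ (ih σ)

theorem step_rename {r : Rule} {t t' : Tm} (f : ℕ → ℕ) (h : Step r t t') :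
    Step r (rename f t) (rename f t') := by
  rw [rename_eq_subst, rename_eq_subst]
  exact step_subst _ h

theorem step_plug {r : Rule} {t t' : Tm} (L : List Tm) (h : Step r t t') :
    Step r (plug L t) (plug L t') := by
  induction L with
  | nil => exact h
  | cons e L ih => exact Step.esubL e ih

theorem no_step_bang {r : Rule} {u X : Tm} (h : Step r (bang u) X) : False := by
  cases h with
  | root h => cases h

theorem no_step_var {r : Rule} {k : ℕ} {X : Tm} (h : Step r (var k) X) : False := by
  cases h with
  | root h => cases h

theorem plug_lam_inj {L L' : List Tm} {s s' : Tm}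
    (h : plug L (lam s) = plug L' (lam s')) : L = L' ∧ s = s' := by
  induction L generalizing L' with
  | nil =>
      cases L' with
      | nil => exact ⟨rfl, by injection h⟩
      | cons e M => exact absurd h (by simp [plug])
  | cons e M ih =>
      cases L' with
      | nil => exact absurd h (by simp [plug])
      | cons e' M' =>
          simp only [plug, Tm.esub.injEq] at h
          obtain ⟨h1, h2⟩ := h
          obtain ⟨rfl, rfl⟩ := ih h1
          exact ⟨by rw [h2], rfl⟩

theorem plug_bang_inj {L L' : List Tm} {s s' : Tm}
    (h : plug L (bang s) = plug L' (bang s')) : L = L' ∧ s = s' := by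
  induction L generalizing L' with
  | nil =>
      cases L' with
      | nil => exact ⟨rfl, by injection h⟩
      | cons e M => exact absurd h (by simp [plug])
  | cons e M ih =>
      cases L' with
      | nil => exact absurd h (by simp [plug])
      | cons e' M' =>
          simp only [plug, Tm.esub.injEq] at h
          obtain ⟨h1, h2⟩ := h
          obtain ⟨rfl, rfl⟩ := ih h1
          exact ⟨by rw [h2], rfl⟩

theorem root_app_inv {r : Rule} {A u X : Tm} (h : Root r (Tm.app A u) X) :
    r = .dB ∧ ∃ L s, A = plug L (lam s) ∧
      X = plug L (Tm.esub s (rename (· + L.length) u)) := by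
  cases h with
  | dB L s u => exact ⟨rfl, L, s, rfl, rfl⟩

theorem root_esub_inv {r : Rule} {A e X : Tm} (h : Root r (Tm.esub A e) X) :
    r = .sb ∧ ∃ L w, e = plug L (bang w) ∧ X = plug L (substIn L.length w A) := by
  cases h with
  | sb L a w => exact ⟨rfl, L, w, rfl, rfl⟩

theorem root_der_inv {r : Rule} {A X : Tm} (h : Root r (Tm.der A) X) :
    r = .db ∧ ∃ L w, A = plug L (bang w) ∧ X = plug L w := by
  cases h with
  | db L w => exact ⟨rfl, L, w, rfl, rfl⟩

theorem root_det {r r' : Rule} {t u u' : Tm}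
    (h : Root r t u) (h' : Root r' t u') : r = r' ∧ u = u' := by
  cases h with
  | dB L a b =>
      obtain ⟨rfl, L', s', hA, rfl⟩ := root_app_inv h'
      obtain ⟨rfl, rfl⟩ := plug_lam_inj hA
      exact ⟨rfl, rfl⟩
  | sb L a b =>
      obtain ⟨rfl, L', w', hA, rfl⟩ := root_esub_inv h'
      obtain ⟨rfl, rfl⟩ := plug_bang_inj hA
      exact ⟨rfl, rfl⟩
  | db L a =>
      obtain ⟨rfl, L', w', hA, rfl⟩ := root_der_inv h'
      obtain ⟨rfl, rfl⟩ := plug_bang_inj hA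
      exact ⟨rfl, rfl⟩

end CC

namespace CC
open Tm

theorem rename_add_add (p q : ℕ) (v : Tm) :
    rename (· + (p + q)) v = rename (· + q) (rename (· + p) v) := by
  rw [rename_rename]
  congr 1
  funext j; omega

/-- analysis of a weak step on `plug L c`: either it is inside `c`, or it is
a step on the list context, acting on the body by an explicit substitution
`τ` satisfying suitable coherence conditions. -/
theorem spine_step {r : Rule} {c : Tm} :
    ∀ {L : List Tm} {X : Tm}, Step r (plug L c) X →
    (∃ c', Step r c c' ∧ X = plug L c') ∨
    ∃ (M : List Tm) (τ : ℕ → Tm), X = plug M (subst τ c) ∧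
      (∀ b, Step r (plug L b) (plug M (subst τ b))) ∧
      (∀ v, subst τ (rename (· + L.length) v) = rename (· + M.length) v) := by
  intro L
  induction L with
  | nil => exact fun {X} h => Or.inl ⟨X, h, rfl⟩
  | cons e L ih =>
      intro X h
      cases h with
      | root h' =>
          obtain ⟨rfl, L', w, rfl, rfl⟩ := root_esub_inv h'
          right
          refine ⟨L' ++ substL (σIn L'.length w) L, liftSN L.length (σIn L'.length w), ?_, ?_, ?_⟩
          · rw [substIn_eq, subst_plug, plug_append]
          · intro b
            have := Step.root (Root.sb L' (plug L b) w)
            rwa [substIn_eq, subst_plug, ← plug_append] at this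
          · intro v
            have h1 : (fun k => k + (L.length + 1)) = (· + (1 + L.length)) := by
              funext j; omega
            show subst (liftSN L.length (σIn L'.length w))
              (rename (fun k => k + (L.length + 1)) v) = _
            rw [h1, rename_add_add, subst_liftSN_rename, subst_rename]
            have h2 : subst (fun k => σIn L'.length w (k + 1)) v =
                rename (· + L'.length) v := by
              show subst (fun k => var (k + L'.length)) v = _
              rw [rename_eq_subst]
            rw [h2, ← rename_add_add]
            have h3 : (fun k => k + (L'.length + L.length)) =
                (· + (L' ++ substL (σIn L'.length w) L).length) := by
              funext j
              simp only [List.length_append, substL_length]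
            rw [h3]
      | esubL u h' =>
          rcases ih h' with ⟨c', hc, rfl⟩ | ⟨M, τ, rfl, hstep, hren⟩
          · exact Or.inl ⟨c', hc, rfl⟩
          · right
            refine ⟨e :: M, τ, rfl, fun b => Step.esubL e (hstep b), ?_⟩
            intro v
            have h1 : (fun k => k + (L.length + 1)) = (· + (1 + L.length)) := by
              funext j; omega
            have h2 : (fun k => k + (M.length + 1)) = (· + (1 + M.length)) := by
              funext j; omega
            show subst τ (rename (fun k => k + (L.length + 1)) v) =
              rename (fun k => k + (M.length + 1)) v
            rw [h1, h2, rename_add_add, rename_add_add, hren]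
      | esubR t h' =>
          rename_i e'
          right
          refine ⟨e' :: L, Tm.var, ?_, ?_, ?_⟩
          · show Tm.esub (plug L c) e' = Tm.esub (plug L (subst Tm.var c)) e'
            rw [subst_var_id]
          · intro b
            show Step r (Tm.esub (plug L b) e) (Tm.esub (plug L (subst Tm.var b)) e')
            rw [subst_var_id]
            exact Step.esubR _ h'
          · intro v
            show subst Tm.var (rename (fun k => k + (L.length + 1)) v) =
              rename (fun k => k + (L.length + 1)) v
            rw [subst_var_id]

end CC

namespace CC
open Tm

/-- commuting an external substitution `τ` (as produced by `spine_step`)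
with the `substIn` of an s!-step -/
theorem subst_substIn_of_ren {τ : ℕ → Tm} {n m : ℕ}
    (hren : ∀ v, subst τ (rename (· + n) v) = rename (· + m) v)
    (w a : Tm) :
    subst τ (substIn n w a) = substIn m (subst τ w) a := by
  rw [substIn_eq, substIn_eq, subst_subst]
  apply congrFun (congrArg subst ?_) a
  funext k
  cases k with
  | zero => rfl
  | succ k =>
      show subst τ (var (k + n)) = var (k + m)
      have := hren (var k)
      simpa [rename] using this

/-- one-step strong commutation with rule bookkeeping: two coinitial steps
are either identical (with the same rule), or they can be closed in exactly
one step on each side, swapping the rules. -/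
theorem root_swap {r₁ r₂ : Rule} {t u₁ u₂ : Tm}
    (h₁ : Root r₁ t u₁) (h₂ : Step r₂ t u₂) :
    (r₁ = r₂ ∧ u₁ = u₂) ∨ ∃ v, Step r₂ u₁ v ∧ Step r₁ u₂ v := by
  cases h₁ with
  | dB L s u =>
      cases h₂ with
      | root h₂' =>
          left
          exact root_det (Root.dB L s u) h₂'
      | appL _ h₂' =>
          rcases spine_step h₂' with ⟨c', hc, rfl⟩ | ⟨M, τ, rfl, hstep, hren⟩
          · cases hc with
            | root hr => cases hr
            | lam hs =>
                right
                rename_i s'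
                refine ⟨plug L (Tm.esub s' (rename (· + L.length) u)), ?_, ?_⟩
                · exact step_plug L (Step.esubL _ hs)
                · exact Step.root (Root.dB L s' u)
          · right
            refine ⟨plug M (subst τ (Tm.esub s (rename (· + L.length) u))), ?_, ?_⟩
            · exact hstep _
            · show Step Rule.dB (Tm.app (plug M (Tm.lam (subst (liftS τ) s))) u) _
              have he : subst τ (Tm.esub s (rename (· + L.length) u)) =
                  Tm.esub (subst (liftS τ) s) (rename (· + M.length) u) := by
                show Tm.esub (subst (liftS τ) s) (subst τ (rename (· + L.length) u)) = _
                rw [hren]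
              rw [he]
              exact Step.root (Root.dB M _ u)
      | appR _ h₂' =>
          right
          rename_i u'
          refine ⟨plug L (Tm.esub s (rename (· + L.length) u')), ?_, ?_⟩
          · exact step_plug L (Step.esubR _ (step_rename _ h₂'))
          · exact Step.root (Root.dB L s u')
  | sb L a w =>
      cases h₂ with
      | root h₂' =>
          left
          exact root_det (Root.sb L a w) h₂'
      | esubL _ h₂' =>
          right
          rename_i a'
          refine ⟨plug L (substIn L.length w a'), ?_, ?_⟩
          · exact step_plug L (step_subst _ h₂')
          · exact Step.root (Root.sb L a' w)
      | esubR _ h₂' =>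
          rcases spine_step h₂' with ⟨c', hc, rfl⟩ | ⟨M, τ, rfl, hstep, hren⟩
          · exact absurd hc (fun hc => no_step_bang hc)
          · right
            refine ⟨plug M (substIn M.length (subst τ w) a), ?_, ?_⟩
            · have := hstep (substIn L.length w a)
              rwa [subst_substIn_of_ren hren] at this
            · show Step Rule.sb (Tm.esub a (plug M (Tm.bang (subst τ w)))) _
              exact Step.root (Root.sb M a (subst τ w))
  | db L w =>
      cases h₂ with
      | root h₂' =>
          left
          exact root_det (Root.db L w) h₂'
      | der h₂' =>
          rcases spine_step h₂' with ⟨c', hc, rfl⟩ | ⟨M, τ, rfl, hstep, hren⟩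
          · exact absurd hc (fun hc => no_step_bang hc)
          · right
            refine ⟨plug M (subst τ w), ?_, ?_⟩
            · exact hstep w
            · show Step Rule.db (Tm.der (plug M (Tm.bang (subst τ w)))) _
              exact Step.root (Root.db M (subst τ w))

theorem swap {r₁ r₂ : Rule} {t u₁ u₂ : Tm}
    (h₁ : Step r₁ t u₁) (h₂ : Step r₂ t u₂) :
    (r₁ = r₂ ∧ u₁ = u₂) ∨ ∃ v, Step r₂ u₁ v ∧ Step r₁ u₂ v := by
  induction h₁ generalizing u₂ with
  | root h₁' => exact root_swap h₁' h₂
  | appL u h₁' ih =>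
      cases h₂ with
      | root h₂' =>
          rcases root_swap h₂' (Step.appL u h₁') with ⟨he, heq⟩ | ⟨v, s₁, s₂⟩
          · exact Or.inl ⟨he.symm, heq.symm⟩
          · exact Or.inr ⟨v, s₂, s₁⟩
      | appL _ h₂' =>
          rcases ih h₂' with ⟨he, rfl⟩ | ⟨v, s₁, s₂⟩
          · exact Or.inl ⟨he, rfl⟩
          · exact Or.inr ⟨Tm.app v u, Step.appL u s₁, Step.appL u s₂⟩
      | appR _ h₂' =>
          exact Or.inr ⟨_, Step.appR _ h₂', Step.appL _ h₁'⟩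
  | appR t h₁' ih =>
      cases h₂ with
      | root h₂' =>
          rcases root_swap h₂' (Step.appR t h₁') with ⟨he, heq⟩ | ⟨v, s₁, s₂⟩
          · exact Or.inl ⟨he.symm, heq.symm⟩
          · exact Or.inr ⟨v, s₂, s₁⟩
      | appL _ h₂' =>
          exact Or.inr ⟨_, Step.appL _ h₂', Step.appR _ h₁'⟩
      | appR _ h₂' =>
          rcases ih h₂' with ⟨he, rfl⟩ | ⟨v, s₁, s₂⟩
          · exact Or.inl ⟨he, rfl⟩
          · exact Or.inr ⟨Tm.app t v, Step.appR t s₁, Step.appR t s₂⟩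
  | lam h₁' ih =>
      cases h₂ with
      | root h₂' => cases h₂'
      | lam h₂' =>
          rcases ih h₂' with ⟨he, rfl⟩ | ⟨v, s₁, s₂⟩
          · exact Or.inl ⟨he, rfl⟩
          · exact Or.inr ⟨Tm.lam v, Step.lam s₁, Step.lam s₂⟩
  | der h₁' ih =>
      cases h₂ with
      | root h₂' =>
          rcases root_swap h₂' (Step.der h₁') with ⟨he, heq⟩ | ⟨v, s₁, s₂⟩
          · exact Or.inl ⟨he.symm, heq.symm⟩
          · exact Or.inr ⟨v, s₂, s₁⟩
      | der h₂' =>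
          rcases ih h₂' with ⟨he, rfl⟩ | ⟨v, s₁, s₂⟩
          · exact Or.inl ⟨he, rfl⟩
          · exact Or.inr ⟨Tm.der v, Step.der s₁, Step.der s₂⟩
  | esubL u h₁' ih =>
      cases h₂ with
      | root h₂' =>
          rcases root_swap h₂' (Step.esubL u h₁') with ⟨he, heq⟩ | ⟨v, s₁, s₂⟩
          · exact Or.inl ⟨he.symm, heq.symm⟩
          · exact Or.inr ⟨v, s₂, s₁⟩
      | esubL _ h₂' =>
          rcases ih h₂' with ⟨he, rfl⟩ | ⟨v, s₁, s₂⟩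
          · exact Or.inl ⟨he, rfl⟩
          · exact Or.inr ⟨Tm.esub v u, Step.esubL u s₁, Step.esubL u s₂⟩
      | esubR _ h₂' =>
          exact Or.inr ⟨_, Step.esubR _ h₂', Step.esubL _ h₁'⟩
  | esubR t h₁' ih =>
      cases h₂ with
      | root h₂' =>
          rcases root_swap h₂' (Step.esubR t h₁') with ⟨he, heq⟩ | ⟨v, s₁, s₂⟩
          · exact Or.inl ⟨he.symm, heq.symm⟩
          · exact Or.inr ⟨v, s₂, s₁⟩
      | esubL _ h₂' =>
          exact Or.inr ⟨_, Step.esubL _ h₂', Step.esubR _ h₁'⟩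
      | esubR _ h₂' =>
          rcases ih h₂' with ⟨he, rfl⟩ | ⟨v, s₁, s₂⟩
          · exact Or.inl ⟨he, rfl⟩
          · exact Or.inr ⟨Tm.esub t v, Step.esubR t s₁, Step.esubR t s₂⟩

end CC

namespace CC

/-- the counter cost of one step of each rule -/
def cost : Rule → ℕ × ℕ
  | .dB => (1, 0)
  | .sb => (0, 1)
  | .db => (0, 1)

theorem redcnt_step {r : Rule} {t t₁ u : Tm} {c : ℕ × ℕ}
    (h : Step r t t₁) (h₂ : RedCnt t₁ c u) : RedCnt t (cost r + c) u := by
  obtain ⟨b, e⟩ := c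
  cases r with
  | dB =>
      have : cost Rule.dB + (b, e) = (b + 1, e) := by
        simp [cost, Prod.ext_iff, Nat.add_comm]
      rw [this]; exact RedCnt.db h h₂
  | sb =>
      have : cost Rule.sb + (b, e) = (b, e + 1) := by
        simp [cost, Prod.ext_iff, Nat.add_comm]
      rw [this]; exact RedCnt.ex (Or.inl h) h₂
  | db =>
      have : cost Rule.db + (b, e) = (b, e + 1) := by
        simp [cost, Prod.ext_iff, Nat.add_comm]
      rw [this]; exact RedCnt.ex (Or.inr h) h₂

/-- the strip lemma with counters -/
theorem strip {r : Rule} {t u₁ u₂ : Tm} {c₂ : ℕ × ℕ}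
    (h₁ : Step r t u₁) (h₂ : RedCnt t c₂ u₂) :
    (∃ c', c₂ = cost r + c' ∧ RedCnt u₁ c' u₂) ∨
    (∃ t', RedCnt u₁ c₂ t' ∧ Step r u₂ t') := by
  induction h₂ generalizing r u₁ with
  | refl t => exact Or.inr ⟨u₁, RedCnt.refl u₁, h₁⟩
  | @db t t₁ u b e hs hr ih =>
      rcases swap h₁ hs with ⟨rfl, rfl⟩ | ⟨v, s₁, s₂⟩
      · refine Or.inl ⟨(b, e), ?_, hr⟩
        simp [cost, Prod.ext_iff, Nat.add_comm]
      · rcases ih s₂ with ⟨c', hc, hred⟩ | ⟨t', hred, hstep⟩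
        · refine Or.inl ⟨cost Rule.dB + c', ?_, redcnt_step s₁ hred⟩
          obtain ⟨b', e'⟩ := c'
          rcases hr2 : cost r with ⟨x, y⟩
          rw [hr2] at hc
          simp only [cost, Prod.mk_add_mk, Prod.ext_iff] at hc ⊢
          omega
        · refine Or.inr ⟨t', ?_, hstep⟩
          have := redcnt_step s₁ hred
          have h3 : cost Rule.dB + (b, e) = (b + 1, e) := by
            simp [cost, Prod.ext_iff, Nat.add_comm]
          rwa [h3] at this
  | @ex t t₁ u b e hs hr ih =>
      obtain ⟨r₂, hs', hcost⟩ : ∃ r₂, Step r₂ t t₁ ∧ cost r₂ = (0, 1) := by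
        rcases hs with h | h
        · exact ⟨Rule.sb, h, rfl⟩
        · exact ⟨Rule.db, h, rfl⟩
      rcases swap h₁ hs' with ⟨rfl, rfl⟩ | ⟨v, s₁, s₂⟩
      · refine Or.inl ⟨(b, e), ?_, hr⟩
        rw [hcost]
        simp [Prod.ext_iff, Nat.add_comm]
      · rcases ih s₂ with ⟨c', hc, hred⟩ | ⟨t', hred, hstep⟩
        · refine Or.inl ⟨cost r₂ + c', ?_, redcnt_step s₁ hred⟩
          obtain ⟨b', e'⟩ := c'
          rcases hr2 : cost r with ⟨x, y⟩
          rw [hr2] at hc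
          rw [hcost]
          simp only [Prod.mk_add_mk, Prod.ext_iff] at hc ⊢
          omega
        · refine Or.inr ⟨t', ?_, hstep⟩
          have := redcnt_step s₁ hred
          rw [hcost] at this
          have h3 : ((0 : ℕ), (1 : ℕ)) + (b, e) = (b, e + 1) := by
            simp [Prod.ext_iff, Nat.add_comm]
          rwa [h3] at this

theorem conf_aux {t u₁ : Tm} {c₁ : ℕ × ℕ} (h₁ : RedCnt t c₁ u₁) :
    ∀ {u₂ : Tm} {c₂ : ℕ × ℕ}, RedCnt t c₂ u₂ →
    ∃ (t' : Tm) (d₁ d₂ : ℕ × ℕ),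
      RedCnt u₁ d₂ t' ∧ RedCnt u₂ d₁ t' ∧
      d₁ ≤ c₁ ∧ d₂ ≤ c₂ ∧ c₁ + d₂ = c₂ + d₁ := by
  induction h₁ with
  | refl t =>
      intro u₂ c₂ h₂
      refine ⟨u₂, (0, 0), c₂, h₂, RedCnt.refl u₂, ?_, le_refl _, ?_⟩
      · obtain ⟨a, b⟩ := c₂; simp [Prod.le_def]
      · exact add_comm _ _
  | @db t t₁ u₁ b e hs hr ih =>
      intro u₂ c₂ h₂
      rcases strip hs h₂ with ⟨c₂', rfl, hred⟩ | ⟨t₂', hred, hstep⟩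
      · obtain ⟨t', d₁, d₂, H1, H2, hle1, hle2, hsum⟩ := ih hred
        refine ⟨t', d₁, d₂, H1, H2, ?_, ?_, ?_⟩
        · obtain ⟨a₁, a₂⟩ := d₁
          simp only [Prod.le_def] at hle1 ⊢
          omega
        · obtain ⟨a₁, a₂⟩ := d₂; obtain ⟨a₃, a₄⟩ := c₂'
          simp only [Prod.le_def, cost, Prod.mk_add_mk] at hle2 ⊢
          omega
        · obtain ⟨a₁, a₂⟩ := d₁; obtain ⟨a₃, a₄⟩ := d₂; obtain ⟨a₅, a₆⟩ := c₂'
          simp only [cost, Prod.mk_add_mk, Prod.ext_iff] at hsum ⊢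
          omega
      · obtain ⟨t', d₁, d₂, H1, H2, hle1, hle2, hsum⟩ := ih hred
        refine ⟨t', cost Rule.dB + d₁, d₂, H1, redcnt_step hstep H2, ?_, hle2, ?_⟩
        · obtain ⟨a₁, a₂⟩ := d₁
          simp only [Prod.le_def, cost, Prod.mk_add_mk] at hle1 ⊢
          omega
        · obtain ⟨a₁, a₂⟩ := d₁; obtain ⟨a₃, a₄⟩ := d₂; obtain ⟨a₅, a₆⟩ := c₂
          simp only [cost, Prod.mk_add_mk, Prod.ext_iff] at hsum ⊢
          omega
  | @ex t t₁ u₁ b e hs hr ih =>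
      intro u₂ c₂ h₂
      obtain ⟨r₂, hs', hcost⟩ : ∃ r₂, Step r₂ t t₁ ∧ cost r₂ = (0, 1) := by
        rcases hs with h | h
        · exact ⟨Rule.sb, h, rfl⟩
        · exact ⟨Rule.db, h, rfl⟩
      rcases strip hs' h₂ with ⟨c₂', rfl, hred⟩ | ⟨t₂', hred, hstep⟩
      · obtain ⟨t', d₁, d₂, H1, H2, hle1, hle2, hsum⟩ := ih hred
        refine ⟨t', d₁, d₂, H1, H2, ?_, ?_, ?_⟩
        · obtain ⟨a₁, a₂⟩ := d₁
          simp only [Prod.le_def] at hle1 ⊢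
          omega
        · obtain ⟨a₁, a₂⟩ := d₂; obtain ⟨a₃, a₄⟩ := c₂'
          rw [hcost]
          simp only [Prod.le_def, Prod.mk_add_mk] at hle2 ⊢
          omega
        · obtain ⟨a₁, a₂⟩ := d₁; obtain ⟨a₃, a₄⟩ := d₂; obtain ⟨a₅, a₆⟩ := c₂'
          rw [hcost]
          simp only [Prod.mk_add_mk, Prod.ext_iff] at hsum ⊢
          omega
      · obtain ⟨t', d₁, d₂, H1, H2, hle1, hle2, hsum⟩ := ih hred
        refine ⟨t', cost r₂ + d₁, d₂, H1, redcnt_step hstep H2, ?_, hle2, ?_⟩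
        · obtain ⟨a₁, a₂⟩ := d₁
          rw [hcost]
          simp only [Prod.le_def, Prod.mk_add_mk] at hle1 ⊢
          omega
        · obtain ⟨a₁, a₂⟩ := d₁; obtain ⟨a₃, a₄⟩ := d₂; obtain ⟨a₅, a₆⟩ := c₂
          rw [hcost]
          simp only [Prod.mk_add_mk, Prod.ext_iff] at hsum ⊢
          omega

end CC

/-- **Counting confluence of weak reduction** (Lemma 3): if `t →w* u₁` with
counter `c₁` and `t →w* u₂` with counter `c₂`, then there exist `t'` and
counters `d₁ ≤ c₁`, `d₂ ≤ c₂` with `u₁ →w* t'` with counter `d₂`,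
`u₂ →w* t'` with counter `d₁`, and `c₁ + d₂ = c₂ + d₁`. -/
theorem counting_confluence {t u₁ u₂ : Tm} {c₁ c₂ : ℕ × ℕ}
    (h₁ : RedCnt t c₁ u₁) (h₂ : RedCnt t c₂ u₂) :
    ∃ (t' : Tm) (d₁ d₂ : ℕ × ℕ),
      RedCnt u₁ d₂ t' ∧ RedCnt u₂ d₁ t' ∧
      d₁ ≤ c₁ ∧ d₂ ≤ c₂ ∧ c₁ + d₂ = c₂ + d₁ := by
  exact CC.conf_aux h₁ h₂
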